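/- The set of points of J = C³/Λ fixed by the S₃-subgroup generated by −r₁ : (z₁,z₂,z₃) ↦ (−z₁,−z₃,−z₂) and the cyclic permutation (z₁,z₂,z₃) ↦ (z₃,z₁,z₂) consists of exactly 4 points: the classes of ι₁·(ᾱ,ᾱ,ᾱ)/2 + ι₂·(1,1,1) with ι₁, ι₂ ∈ {0,1}. -/
import Mathlib


noncomputable section

def Kalpha : ℂ := (1 + Complex.I * Real.sqrt 7) / 2
def Kalphabar : ℂ := (1 - Complex.I * Real.sqrt 7) / 2

def Ke1 : Fin 3 → ℂ := ![0, Kalpha, Kalpha]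
def Ke2 : Fin 3 → ℂ := ![0, 0, 2]
def Ke3 : Fin 3 → ℂ := ![1, 1, Kalphabar]

def LambdaZ : Submodule ℤ (Fin 3 → ℂ) :=
  Submodule.span ℤ {Ke1, Ke2, Ke3, Kalpha • Ke1, Kalpha • Ke2, Kalpha • Ke3}

/-- Representatives `ι₁·(ᾱ,ᾱ,ᾱ)/2 + ι₂·(1,1,1)`, `ι₁,ι₂ ∈ {0,1}`. -/
def omegaPt (i j : ℂ) : Fin 3 → ℂ :=
  i • ![Kalphabar/2, Kalphabar/2, Kalphabar/2] + j • ![1,1,1]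

lemma sqrt7_sq : ((Real.sqrt 7 : ℝ) : ℂ)^2 = 7 := by
  have h : (Real.sqrt 7 : ℝ)^2 = 7 := Real.sq_sqrt (by norm_num)
  calc ((Real.sqrt 7 : ℝ) : ℂ)^2 = (((Real.sqrt 7 : ℝ)^2 : ℝ) : ℂ) := by push_cast; ring
  _ = 7 := by rw [h]; norm_num

lemma halpha_sq : Kalpha * Kalpha = Kalpha - 2 := by
  unfold Kalpha
  linear_combination (Complex.I^2/4) * sqrt7_sq + (7/4) * Complex.I_sq

lemma halbar : Kalphabar = 1 - Kalpha := by
  unfold Kalpha Kalphabar; ring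

lemma halpha_im : Kalpha.im = Real.sqrt 7 / 2 := by
  simp [Kalpha, Complex.div_im, Complex.add_im, Complex.mul_im]

lemma real_unique {r s r' s' : ℝ} (h : (r:ℂ) + s*Kalpha = r' + s'*Kalpha) :
    r = r' ∧ s = s' := by
  have him := congrArg Complex.im h
  simp [Complex.add_im, Complex.mul_im, halpha_im] at him
  subst him
  have hre := congrArg Complex.re h
  simp at hre
  exact ⟨hre, rfl⟩

lemma int_unique {a b c d : ℤ} (h : (a:ℂ) + b*Kalpha = c + d*Kalpha) :
    a = c ∧ b = d := by
  have := real_unique (r := a) (s := b) (r' := c) (s' := d) (by push_cast; exact_mod_cast h)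
  exact ⟨by exact_mod_cast this.1, by exact_mod_cast this.2⟩

lemma mem_span6 (v : Fin 3 → ℂ) : v ∈ LambdaZ ↔ ∃ a b c d e f : ℤ,
    v = a • Ke1 + b • Ke2 + c • Ke3 + d • (Kalpha • Ke1) + e • (Kalpha • Ke2)
      + f • (Kalpha • Ke3) := by
  simp only [LambdaZ, Submodule.mem_span_insert, Submodule.mem_span_singleton]
  constructor
  · rintro ⟨a, _, ⟨b, _, ⟨c, _, ⟨d, _, ⟨e, _, ⟨f, rfl⟩, rfl⟩, rfl⟩, rfl⟩, rfl⟩, rfl⟩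
    exact ⟨a, b, c, d, e, f, by module⟩
  · rintro ⟨a, b, c, d, e, f, rfl⟩
    exact ⟨a, _, ⟨b, _, ⟨c, _, ⟨d, _, ⟨e, _, ⟨f, rfl⟩, rfl⟩, rfl⟩, rfl⟩, rfl⟩, by module⟩

lemma comb_apply (a b c d e f : ℤ) :
    (a • Ke1 + b • Ke2 + c • Ke3 + d • (Kalpha • Ke1) + e • (Kalpha • Ke2)
      + f • (Kalpha • Ke3))
    = ![((c:ℂ)) + (f:ℂ)*Kalpha,
       ((c:ℂ) - 2*d) + ((a:ℂ)+d+f)*Kalpha,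
       ((2*(b:ℂ)+c-2*d+2*f)) + ((a:ℂ)-c+d+2*e)*Kalpha] := by
  funext k
  fin_cases k <;>
    simp [Ke1, Ke2, Ke3, Pi.add_apply, Pi.smul_apply, smul_eq_mul]
  · linear_combination (d:ℂ) * halpha_sq
  · linear_combination ((d:ℂ) - f) * halpha_sq + ((c:ℂ) + f*Kalpha) * halbar

lemma mem_iff (v : Fin 3 → ℂ) :
    v ∈ LambdaZ ↔ ∃ x y : Fin 3 → ℤ,
      (∀ k, v k = (x k : ℂ) + (y k : ℂ) * Kalpha) ∧
      2 ∣ (x 0 - x 1) ∧ 2 ∣ (x 0 - x 2) ∧ 2 ∣ (y 0 + y 1 + y 2 + x 0) := by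
  rw [mem_span6]
  constructor
  · rintro ⟨a, b, c, d, e, f, rfl⟩
    refine ⟨![c, c-2*d, 2*b+c-2*d+2*f], ![f, a+d+f, a-c+d+2*e], ?_, ?_, ?_, ?_⟩
    · intro k
      rw [comb_apply]
      fin_cases k <;> simp <;> push_cast <;> ring
    · simp only [Matrix.cons_val_zero, Matrix.cons_val_one, Matrix.head_cons]; omega
    · simp only [Matrix.cons_val_zero, Matrix.cons_val_two, Matrix.tail_cons, Matrix.head_cons]; omega
    · simp only [Matrix.cons_val_zero, Matrix.cons_val_one, Matrix.head_cons,
        Matrix.cons_val_two, Matrix.tail_cons]; omega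
  · rintro ⟨x, y, hv, ⟨k1, hk1⟩, ⟨k2, hk2⟩, ⟨k3, hk3⟩⟩
    refine ⟨y 1 - k1 - y 0, k1 - k2 - y 0, x 0, k1, k3 - y 1, y 0, ?_⟩
    rw [comb_apply]
    funext k
    have h0 := hv 0; have h1 := hv 1; have h2 := hv 2
    have c1 : (x 0 : ℂ) - x 1 = 2 * (k1:ℂ) := by exact_mod_cast hk1
    have c2 : (x 0 : ℂ) - x 2 = 2 * (k2:ℂ) := by exact_mod_cast hk2
    have c3 : (y 0 : ℂ) + y 1 + y 2 + x 0 = 2 * (k3:ℂ) := by exact_mod_cast hk3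
    fin_cases k <;> simp <;> push_cast
    · linear_combination h0
    · linear_combination h1 - c1
    · linear_combination h2 - c2 + Kalpha * c3

lemma omegaPt_sub (i j i' j' : ℂ) :
    omegaPt i j - omegaPt i' j' = omegaPt (i-i') (j-j') := by
  funext k
  fin_cases k <;>
    simp [omegaPt, Pi.add_apply, Pi.sub_apply, Pi.smul_apply, smul_eq_mul] <;> ring

lemma omega_not_mem (di dj : ℤ) (h1 : di = 0 ∨ di = 1 ∨ di = -1)
    (h2 : dj = 0 ∨ dj = 1 ∨ dj = -1) (h3 : ¬(di = 0 ∧ dj = 0)) :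
    omegaPt (di:ℂ) (dj:ℂ) ∉ LambdaZ := by
  intro hmem
  rw [mem_iff] at hmem
  obtain ⟨x, y, hv, ⟨k1,hk1⟩, ⟨k2,hk2⟩, ⟨k3,hk3⟩⟩ := hmem
  have key0 := int_unique (a := di + 2*dj) (b := -di) (c := 2*(x 0)) (d := 2*(y 0))
    (by have h := hv 0; simp [omegaPt, Pi.add_apply, Pi.smul_apply, smul_eq_mul] at h;
        push_cast; linear_combination 2*h - (di:ℂ)*halbar)
  have key1 := int_unique (a := di + 2*dj) (b := -di) (c := 2*(x 1)) (d := 2*(y 1))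
    (by have h := hv 1; simp [omegaPt, Pi.add_apply, Pi.smul_apply, smul_eq_mul] at h;
        push_cast; linear_combination 2*h - (di:ℂ)*halbar)
  have key2 := int_unique (a := di + 2*dj) (b := -di) (c := 2*(x 2)) (d := 2*(y 2))
    (by have h := hv 2; simp [omegaPt, Pi.add_apply, Pi.smul_apply, smul_eq_mul] at h;
        push_cast; linear_combination 2*h - (di:ℂ)*halbar)
  obtain ⟨a0, b0⟩ := key0
  obtain ⟨a1, b1⟩ := key1
  obtain ⟨a2, b2⟩ := key2
  omega


/-- The points of `J = ℂ³/Λ` fixed by the `S₃`-subgroup generated by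
`-r₁ : (z₁,z₂,z₃) ↦ (-z₁,-z₃,-z₂)` and the cyclic permutation
`(z₁,z₂,z₃) ↦ (z₃,z₁,z₂)` are exactly the `4` pairwise distinct classes of
`ι₁·(ᾱ,ᾱ,ᾱ)/2 + ι₂·(1,1,1)`, `ι₁,ι₂ ∈ {0,1}`. -/
theorem fixed_points_of_S3 :
    (∀ z : Fin 3 → ℂ,
      ((![-z 0, -z 2, -z 1] - z ∈ LambdaZ) ∧ (![z 2, z 0, z 1] - z ∈ LambdaZ)) ↔
      (∃ i j : ℂ, (i = 0 ∨ i = 1) ∧ (j = 0 ∨ j = 1) ∧ z - omegaPt i j ∈ LambdaZ)) ∧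
    (∀ i j i' j' : ℂ, (i = 0 ∨ i = 1) → (j = 0 ∨ j = 1) → (i' = 0 ∨ i' = 1) →
      (j' = 0 ∨ j' = 1) → (i, j) ≠ (i', j') →
      omegaPt i j - omegaPt i' j' ∉ LambdaZ) := by
  constructor
  · intro z
    constructor
    · rintro ⟨hτ, hσ⟩
      rw [mem_iff] at hτ hσ
      obtain ⟨X, Y, he, hX1, hX2, hX3⟩ := hτ
      obtain ⟨P, Q, hf, hP1, hP2, hP3⟩ := hσ
      have e0 := he 0; have e1 := he 1; have e2 := he 2
      have f0 := hf 0; have f1 := hf 1; have f2 := hf 2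
      simp only [Pi.sub_apply, Matrix.cons_val_zero, Matrix.cons_val_one, Matrix.head_cons,
        Matrix.cons_val_two, Matrix.tail_cons] at e0 e1 e2 f0 f1 f2
      obtain ⟨hX12, hY12⟩ := int_unique (a := X 1) (b := Y 1) (c := X 2) (d := Y 2)
        (by push_cast; linear_combination e2 - e1)
      obtain ⟨hPs, hQs⟩ := int_unique (a := P 0 + P 1 + P 2) (b := Q 0 + Q 1 + Q 2)
        (c := 0) (d := 0) (by push_cast; linear_combination -f0 - f1 - f2)
      obtain ⟨hXr, hYr⟩ := int_unique (a := X 1) (b := Y 1)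
        (c := X 0 - P 0 + P 1) (d := Y 0 - Q 0 + Q 1)
        (by push_cast; linear_combination e0 - e1 - f0 + f1)
      have hz0 : z 0 = -((X 0 : ℂ) + (Y 0) * Kalpha)/2 := by linear_combination -e0/2
      have hz1 : z 1 = z 0 - ((P 1 : ℂ) + (Q 1) * Kalpha) := by linear_combination -f1
      have hz2 : z 2 = z 0 + ((P 0 : ℂ) + (Q 0) * Kalpha) := by linear_combination f0
      obtain ⟨i, hi01, k, hk⟩ : ∃ i : ℤ, (i = 0 ∨ i = 1) ∧ ∃ k, i - Y 0 = 2*k :=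
        ⟨Y 0 % 2, by omega, (Y 0 % 2 - Y 0)/2, by omega⟩
      obtain ⟨l, hl⟩ : ∃ l, X 0 + i = 2*l := ⟨(X 0 + i)/2, by omega⟩
      obtain ⟨m, hm⟩ : ∃ m, X 0 + Y 0 = 2*m := ⟨(X 0 + Y 0)/2, by omega⟩
      obtain ⟨j, hj01, n, hn⟩ : ∃ j : ℤ, (j = 0 ∨ j = 1) ∧ ∃ n, m + Q 0 + Q 1 - j = 2*n :=
        ⟨(m + Q 0 + Q 1) % 2, by omega, (m + Q 0 + Q 1 - (m + Q 0 + Q 1) % 2)/2, by omega⟩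
      refine ⟨(i:ℂ), (j:ℂ), ?_, ?_, ?_⟩
      · rcases hi01 with h | h <;> [left; right] <;> rw [h] <;> norm_num
      · rcases hj01 with h | h <;> [left; right] <;> rw [h] <;> norm_num
      · rw [mem_iff]
        have hkC : (i:ℂ) - Y 0 = 2*(k:ℂ) := by exact_mod_cast hk
        have hlC : (X 0:ℂ) + i = 2*(l:ℂ) := by exact_mod_cast hl
        refine ⟨![-l-j, -l-j - P 1, -l-j + P 0], ![k, k - Q 1, k + Q 0], ?_, ?_, ?_, ?_⟩
        · intro t
          fin_cases t <;>
            simp [omegaPt, Pi.sub_apply, Pi.add_apply, Pi.smul_apply, smul_eq_mul] <;> push_cast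
          · linear_combination hz0 - (i:ℂ)/2*halbar - hlC/2 + Kalpha/2*hkC
          · linear_combination hz1 + hz0 - (i:ℂ)/2*halbar - hlC/2 + Kalpha/2*hkC
          · linear_combination hz2 + hz0 - (i:ℂ)/2*halbar - hlC/2 + Kalpha/2*hkC
        · simp only [Matrix.cons_val_zero, Matrix.cons_val_one, Matrix.head_cons]; omega
        · simp only [Matrix.cons_val_zero, Matrix.cons_val_two, Matrix.tail_cons,
            Matrix.head_cons]; omega
        · simp only [Matrix.cons_val_zero, Matrix.cons_val_one, Matrix.head_cons,
            Matrix.cons_val_two, Matrix.tail_cons]; omega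
    · rintro ⟨i, j, hi, hj, hz⟩
      obtain ⟨ii, rfl⟩ : ∃ ii : ℤ, i = (ii:ℂ) := by
        rcases hi with rfl | rfl
        exacts [⟨0, by norm_num⟩, ⟨1, by norm_num⟩]
      obtain ⟨jj, rfl⟩ : ∃ jj : ℤ, j = (jj:ℂ) := by
        rcases hj with rfl | rfl
        exacts [⟨0, by norm_num⟩, ⟨1, by norm_num⟩]
      rw [mem_iff] at hz
      obtain ⟨x, y, hv, ⟨k1,hk1⟩, ⟨k2,hk2⟩, ⟨k3,hk3⟩⟩ := hz
      have h0 := hv 0; have h1 := hv 1; have h2 := hv 2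
      simp [omegaPt, Pi.sub_apply, Pi.add_apply, Pi.smul_apply, smul_eq_mul] at h0 h1 h2
      constructor
      · rw [mem_iff]
        refine ⟨![-2*x 0 - ii - 2*jj, -(x 1) - x 2 - ii - 2*jj, -(x 1) - x 2 - ii - 2*jj],
                ![-2*y 0 + ii, -(y 1) - y 2 + ii, -(y 1) - y 2 + ii], ?_, ?_, ?_, ?_⟩
        · intro t
          fin_cases t <;>
            simp [Pi.sub_apply] <;> push_cast
          · linear_combination -2*h0 - (ii:ℂ)*halbar
          · linear_combination -h1 - h2 - (ii:ℂ)*halbar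
          · linear_combination -h1 - h2 - (ii:ℂ)*halbar
        · simp only [Matrix.cons_val_zero, Matrix.cons_val_one, Matrix.head_cons]; omega
        · simp only [Matrix.cons_val_zero, Matrix.cons_val_two, Matrix.tail_cons,
            Matrix.head_cons]; omega
        · simp only [Matrix.cons_val_zero, Matrix.cons_val_one, Matrix.head_cons,
            Matrix.cons_val_two, Matrix.tail_cons]; omega
      · rw [mem_iff]
        refine ⟨![x 2 - x 0, x 0 - x 1, x 1 - x 2], ![y 2 - y 0, y 0 - y 1, y 1 - y 2],
          ?_, ?_, ?_, ?_⟩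
        · intro t
          fin_cases t <;>
            simp [Pi.sub_apply] <;> push_cast
          · linear_combination h2 - h0
          · linear_combination h0 - h1
          · linear_combination h1 - h2
        · simp only [Matrix.cons_val_zero, Matrix.cons_val_one, Matrix.head_cons]; omega
        · simp only [Matrix.cons_val_zero, Matrix.cons_val_two, Matrix.tail_cons,
            Matrix.head_cons]; omega
        · simp only [Matrix.cons_val_zero, Matrix.cons_val_one, Matrix.head_cons,
            Matrix.cons_val_two, Matrix.tail_cons]; omega
  · intro i j i' j' hi hj hi' hj' hne hmem
    obtain ⟨di, dj, hd1, hd2, hd3, hdi, hdj⟩ : ∃ di dj : ℤ,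
        (di = 0 ∨ di = 1 ∨ di = -1) ∧ (dj = 0 ∨ dj = 1 ∨ dj = -1) ∧ ¬(di = 0 ∧ dj = 0) ∧
        i - i' = (di:ℂ) ∧ j - j' = (dj:ℂ) := by
      rcases hi with rfl | rfl <;> rcases hi' with rfl | rfl <;>
        rcases hj with rfl | rfl <;> rcases hj' with rfl | rfl <;>
        first
          | (exact absurd rfl hne)
          | (refine ⟨0, 1, ?_, ?_, ?_, ?_, ?_⟩ <;> (norm_num; done))
          | (refine ⟨0, -1, ?_, ?_, ?_, ?_, ?_⟩ <;> (norm_num; done))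
          | (refine ⟨1, 0, ?_, ?_, ?_, ?_, ?_⟩ <;> (norm_num; done))
          | (refine ⟨1, 1, ?_, ?_, ?_, ?_, ?_⟩ <;> (norm_num; done))
          | (refine ⟨1, -1, ?_, ?_, ?_, ?_, ?_⟩ <;> (norm_num; done))
          | (refine ⟨-1, 0, ?_, ?_, ?_, ?_, ?_⟩ <;> (norm_num; done))
          | (refine ⟨-1, 1, ?_, ?_, ?_, ?_, ?_⟩ <;> (norm_num; done))
          | (refine ⟨-1, -1, ?_, ?_, ?_, ?_, ?_⟩ <;> (norm_num; done))
    rw [omegaPt_sub, hdi, hdj] at hmem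
    exact omega_not_mem di dj hd1 hd2 hd3 hmem


end
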